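/- If 0 ≤ z < 1/(2δ) and z ≤ x < α/(2λ), then q(x;z) > 0. In particular q(z;z) = e^{z√(2α)}·(1−2δz) > 0 for 0 ≤ z < 1/(2δ), and ∂q/∂x(x;z) = λ·√(2/α)·(α/(2λ) − x)·e^{x√(2α)}·(1 − e^{2(z−x)√(2α)}) ≥ 0 for z ≤ x < α/(2λ). -/

import Mathlib

/-- positivity of q(x;z) for 0 ≤ z < 1/(2δ) and z ≤ x < α/(2λ), together
with the formulas for q(z;z) and ∂q/∂x. -/
theorem stmt_17 (α δ lam : ℝ) (hα : 0 < α) (hδ : 0 < δ) (hlam : 0 < lam)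
    (hltd : lam < α * δ)
    (ρ : ℝ → ℝ)
    (hρ : ∀ x, ρ x = x ^ 2 + 2 * x / Real.sqrt (2 * α) - (lam / α) / (α * δ - lam))
    (h₁ h₂ h₃ h₄ : ℝ → ℝ)
    (hh₁ : ∀ x, h₁ x = ((α * δ - lam) / (2 * α)) * Real.exp (-x * Real.sqrt (2 * α)) * ρ x)
    (hh₂ : ∀ x, h₂ x = ((α * δ - lam) / (2 * α)) * Real.exp (x * Real.sqrt (2 * α)) *
      (ρ x - 4 * x / Real.sqrt (2 * α)))
    (hh₃ : ∀ x, h₃ x = (lam / α) * (α / (2 * lam) - x - 1 / Real.sqrt (2 * α)) *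
      Real.exp (-x * Real.sqrt (2 * α)))
    (hh₄ : ∀ x, h₄ x = (lam / α) * (x - α / (2 * lam) - 1 / Real.sqrt (2 * α)) *
      Real.exp (x * Real.sqrt (2 * α)))
    (q : ℝ → ℝ → ℝ)
    (hq : ∀ x z, q x z = Real.sqrt (2 * α) *
      (h₂ z - h₁ z * Real.exp (2 * z * Real.sqrt (2 * α))) +
      h₃ x * Real.exp (2 * z * Real.sqrt (2 * α)) - h₄ x) :
    (∀ z x : ℝ, 0 ≤ z → z < 1 / (2 * δ) → z ≤ x → x < α / (2 * lam) → 0 < q x z) ∧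
    (∀ z : ℝ, 0 ≤ z → z < 1 / (2 * δ) →
      q z z = Real.exp (z * Real.sqrt (2 * α)) * (1 - 2 * δ * z) ∧ 0 < q z z) ∧
    (∀ z x : ℝ, z ≤ x → x < α / (2 * lam) →
      deriv (fun x' => q x' z) x = lam * Real.sqrt (2 / α) * (α / (2 * lam) - x) *
        Real.exp (x * Real.sqrt (2 * α)) *
        (1 - Real.exp (2 * (z - x) * Real.sqrt (2 * α))) ∧
      0 ≤ deriv (fun x' => q x' z) x) := by
  set s := Real.sqrt (2 * α) with hsdef
  have hs0 : 0 < s := Real.sqrt_pos.mpr (by positivity)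
  have hs2a : Real.sqrt (2 / α) = s / α := by
    rw [hsdef, show (2 : ℝ) / α = (2 * α) / α ^ 2 by field_simp,
      Real.sqrt_div (by positivity), Real.sqrt_sq hα.le]
  -- the derivative of x' ↦ q x' z, everywhere
  have key : ∀ z x : ℝ, HasDerivAt (fun x' => q x' z)
      (lam / α * s * (α / (2 * lam) - x) * Real.exp (x * s) *
        (1 - Real.exp (2 * (z - x) * s))) x := by
    intro z x
    have hfun : (fun x' => q x' z) = fun x' =>
        (s * (h₂ z - h₁ z * Real.exp (2 * z * s))
        + ((lam / α) * (α / (2 * lam) - x' - 1 / s) * Real.exp (-x' * s) * Real.exp (2 * z * s)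
        - (lam / α) * (x' - α / (2 * lam) - 1 / s) * Real.exp (x' * s))) := by
      funext x'; rw [hq, hh₃, hh₄]; ring
    rw [hfun]
    have d1 : HasDerivAt (fun x' : ℝ => x' * s) s x := by
      simpa using (hasDerivAt_id x).mul_const s
    have d2 : HasDerivAt (fun x' : ℝ => Real.exp (x' * s)) (Real.exp (x * s) * s) x := d1.exp
    have d3 : HasDerivAt (fun x' : ℝ => -x' * s) (-1 * s) x := (hasDerivAt_id x).neg.mul_const s
    have d4 : HasDerivAt (fun x' : ℝ => Real.exp (-x' * s)) (Real.exp (-x * s) * (-1 * s)) x :=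
      d3.exp
    have d5 : HasDerivAt (fun x' : ℝ => (lam / α) * (α / (2 * lam) - x' - 1 / s))
        (lam / α * (-1)) x := by
      have := (((hasDerivAt_const x (α / (2 * lam))).sub (hasDerivAt_id x)).sub
        (hasDerivAt_const x (1 / s))).const_mul (lam / α)
      simpa using this
    have d6 : HasDerivAt (fun x' : ℝ => (lam / α) * (x' - α / (2 * lam) - 1 / s))
        (lam / α * 1) x := by
      have := (((hasDerivAt_id x).sub (hasDerivAt_const x (α / (2 * lam)))).sub
        (hasDerivAt_const x (1 / s))).const_mul (lam / α)
      simpa using this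
    have d7 := (hasDerivAt_const x (s * (h₂ z - h₁ z * Real.exp (2 * z * s)))).add
      ((((d5.mul d4).mul_const (Real.exp (2 * z * s))).sub (d6.mul d2)))
    refine d7.congr_deriv ?_
    symm
    have hxz2 : Real.exp (2 * (z - x) * s) * Real.exp (x * s)
        = Real.exp (2 * z * s) * Real.exp (-x * s) := by
      rw [← Real.exp_add, ← Real.exp_add]; ring_nf
    have hs1 : s * s⁻¹ = 1 := mul_inv_cancel₀ hs0.ne'
    linear_combination (-(lam / α) * s * (α / (2 * lam) - x)) * hxz2 -
      ((lam / α) * (Real.exp (-x * s) * Real.exp (2 * z * s) + Real.exp (x * s))) * hs1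
  -- value at the diagonal
  have qzz : ∀ z : ℝ, q z z = Real.exp (z * s) * (1 - 2 * δ * z) := by
    intro z
    rw [hq, hh₁, hh₂, hh₃, hh₄]
    have hu2 : Real.exp (2 * z * s) = Real.exp (z * s) ^ 2 := by
      rw [sq, ← Real.exp_add]; ring_nf
    have hun : Real.exp (-z * s) = (Real.exp (z * s))⁻¹ := by
      rw [← Real.exp_neg]; ring_nf
    rw [hu2, hun]
    have hne : α * δ - lam ≠ 0 := sub_ne_zero.mpr hltd.ne'
    field_simp
    ring
  have qzz_pos : ∀ z : ℝ, 0 ≤ z → z < 1 / (2 * δ) → 0 < q z z := by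
    intro z hz hz2
    rw [qzz z]
    have h2dz : 2 * δ * z < 1 := by
      have := (lt_div_iff₀ (by positivity)).mp hz2
      nlinarith
    have := Real.exp_pos (z * s)
    nlinarith
  -- derivative nonnegativity
  have dnn : ∀ z x : ℝ, z ≤ x → x ≤ α / (2 * lam) →
      0 ≤ lam / α * s * (α / (2 * lam) - x) * Real.exp (x * s) *
        (1 - Real.exp (2 * (z - x) * s)) := by
    intro z x hzx hxb
    apply mul_nonneg (mul_nonneg (mul_nonneg (by positivity) (by linarith)) (Real.exp_pos _).le)
    have : Real.exp (2 * (z - x) * s) ≤ 1 := by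
      apply Real.exp_le_one_iff.mpr
      have : z - x ≤ 0 := by linarith
      nlinarith
    linarith
  refine ⟨?_, ?_, ?_⟩
  · intro z x hz hz2 hzx hxb
    have hzz := qzz_pos z hz hz2
    rcases eq_or_lt_of_le hzx with rfl | hlt
    · exact hzz
    · have hmono : MonotoneOn (fun x' => q x' z) (Set.Icc z x) := by
        apply monotoneOn_of_deriv_nonneg (convex_Icc z x)
        · exact fun t _ => (key z t).continuousAt.continuousWithinAt
        · exact fun t _ => (key z t).differentiableAt.differentiableWithinAt
        · intro t ht
          rw [interior_Icc] at ht
          rw [(key z t).deriv]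
          exact dnn z t ht.1.le (by linarith [ht.2])
      have := hmono (Set.left_mem_Icc.mpr hzx) (Set.right_mem_Icc.mpr hzx) hzx
      calc (0 : ℝ) < q z z := hzz
        _ ≤ q x z := this
  · intro z hz hz2
    exact ⟨qzz z, qzz_pos z hz hz2⟩
  · intro z x hzx hxb
    have hd : deriv (fun x' => q x' z) x = lam / α * s * (α / (2 * lam) - x) *
        Real.exp (x * s) * (1 - Real.exp (2 * (z - x) * s)) := (key z x).deriv
    constructor
    · rw [hd, hs2a]; ring
    · rw [hd]; exact dnn z x hzx hxb.le
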